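/- Let ρ be a random variable with values in [0, Θ], Θ > 0 finite, E[ρ] > 0, and let λ, t, s > 0. Then lim_{d→∞} ⌊d^{1/3}⌋ · ((1 - (1 - e^{-s·(log d)/d^{1/3}}) · E[1 - e^{-λρt/(2d)}])^{⌊d/log d⌋} - 1) = -(s·λ·t·E[ρ])/2. -/

import Mathlib

open MeasureTheory Filter Real

private lemma aux_exp : Tendsto (fun z : ℝ => (Real.exp z - 1) / z)
    (nhdsWithin 0 {(0:ℝ)}ᶜ) (nhds 1) := by
  have h := hasDerivAt_iff_tendsto_slope.mp (Real.hasDerivAt_exp 0)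
  rw [Real.exp_zero] at h
  refine h.congr fun z => ?_
  simp [slope_def_field]

private lemma aux_log : Tendsto (fun x : ℝ => -Real.log (1 - x) / x)
    (nhdsWithin 0 {(0:ℝ)}ᶜ) (nhds 1) := by
  have h2 : HasDerivAt (fun x : ℝ => (1:ℝ) - x) (-1) 0 := by
    simpa using (hasDerivAt_id (0:ℝ)).const_sub 1
  have h3 := (Real.hasDerivAt_log (by norm_num : (1:ℝ) - 0 ≠ 0)).comp 0 h2
  have h1 : HasDerivAt (fun x : ℝ => -Real.log (1 - x)) 1 0 := by
    exact (h2.log (by norm_num : (1:ℝ) - 0 ≠ 0)).neg.congr_deriv (by norm_num)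
  have h := hasDerivAt_iff_tendsto_slope.mp h1
  refine h.congr fun z => ?_
  simp [slope_def_field]

private lemma exp_lb {x : ℝ} (hx : 0 ≤ x) : x - x ^ 2 ≤ 1 - Real.exp (-x) := by
  have h1 : 1 + x ≤ Real.exp x := by linarith [Real.add_one_le_exp x]
  have hpos : (0:ℝ) < 1 + x := by linarith
  have h2 : Real.exp (-x) ≤ (1 + x)⁻¹ := by
    rw [Real.exp_neg]
    exact inv_anti₀ (by positivity) (by linarith [Real.add_one_le_exp x])
  have h3 : (1 + x)⁻¹ ≤ 1 - (x - x ^ 2) := by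
    rw [inv_le_iff_one_le_mul₀ hpos]
    nlinarith
  linarith

private lemma exp_ub {x : ℝ} (hx : 0 ≤ x) : 1 - Real.exp (-x) ≤ x := by
  have := Real.add_one_le_exp (-x)
  linarith

private lemma key_dm {Ω : Type*} [MeasurableSpace Ω] (μ : Measure Ω) [IsProbabilityMeasure μ]
    (Θ : ℝ) (hΘ : 0 < Θ) (ρ : Ω → ℝ) (hρmeas : Measurable ρ)
    (hbd : ∀ᵐ ω ∂μ, ρ ω ∈ Set.Icc 0 Θ) (lam t : ℝ) (hlam : 0 < lam) (ht : 0 < t) :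
    Tendsto (fun d : ℕ => (d:ℝ) * ∫ ω, (1 - Real.exp (-(lam * ρ ω * t) / (2 * d))) ∂μ)
      atTop (nhds (lam * t * (∫ ω, ρ ω ∂μ) / 2)) := by
  set E := ∫ ω, ρ ω ∂μ with hE
  have hρint : Integrable ρ μ := by
    refine (integrable_const Θ).mono' hρmeas.aestronglyMeasurable ?_
    filter_upwards [hbd] with ω h
    rw [Real.norm_eq_abs, abs_of_nonneg h.1]; exact h.2
  have hρsq : Integrable (fun ω => ρ ω ^ 2) μ := by
    refine (integrable_const (Θ ^ 2)).mono' (hρmeas.pow_const 2).aestronglyMeasurable ?_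
    filter_upwards [hbd] with ω h
    rw [Real.norm_eq_abs, abs_of_nonneg (sq_nonneg _)]
    nlinarith [h.1, h.2]
  have hIρ2 : ∫ ω, ρ ω ^ 2 ∂μ ≤ Θ * E := by
    rw [hE, ← integral_const_mul]
    refine integral_mono_ae hρsq (hρint.const_mul Θ) ?_
    filter_upwards [hbd] with ω h
    nlinarith [h.1, h.2]
  have hIρ2nn : 0 ≤ ∫ ω, ρ ω ^ 2 ∂μ := integral_nonneg fun ω => sq_nonneg _
  have hint : ∀ d : ℕ, Integrable (fun ω => 1 - Real.exp (-(lam * ρ ω * t) / (2 * (d:ℝ)))) μ := by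
    intro d
    refine (integrable_const 1).mono' ?_ ?_
    · exact (measurable_const.sub
        (Real.measurable_exp.comp
          ((((hρmeas.const_mul lam).mul_const t).neg).div_const (2 * (d:ℝ))))).aestronglyMeasurable
    · filter_upwards [hbd] with ω h
      have hx : 0 ≤ lam * ρ ω * t / (2 * (d:ℝ)) := div_nonneg (mul_nonneg (mul_nonneg hlam.le h.1) ht.le) (by positivity)
      have h1 : Real.exp (-(lam * ρ ω * t) / (2 * (d:ℝ))) ≤ 1 := by
        rw [Real.exp_le_one_iff, neg_div]; linarith
      have h2 : 0 < Real.exp (-(lam * ρ ω * t) / (2 * (d:ℝ))) := Real.exp_pos _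
      rw [Real.norm_eq_abs, abs_le]
      constructor <;> linarith
  have hub : ∀ᶠ d : ℕ in atTop,
      (d:ℝ) * ∫ ω, (1 - Real.exp (-(lam * ρ ω * t) / (2 * d))) ∂μ ≤ lam * t * E / 2 := by
    filter_upwards [eventually_ge_atTop 1] with d hd
    have hd0 : (0:ℝ) < d := by exact_mod_cast hd
    have hmono : (∫ ω, (1 - Real.exp (-(lam * ρ ω * t) / (2 * (d:ℝ)))) ∂μ)
        ≤ ∫ ω, (lam * t / (2 * (d:ℝ))) * ρ ω ∂μ := by
      refine integral_mono_ae (hint d) (hρint.const_mul _) ?_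
      filter_upwards [hbd] with ω h
      have heq : lam * ρ ω * t / (2 * (d:ℝ)) = lam * t / (2 * (d:ℝ)) * ρ ω := by
        field_simp
      rw [neg_div, ← heq]
      exact exp_ub (div_nonneg (mul_nonneg (mul_nonneg hlam.le h.1) ht.le) (by positivity))
    rw [integral_const_mul, ← hE] at hmono
    have := mul_le_mul_of_nonneg_left hmono hd0.le
    calc (d:ℝ) * ∫ ω, (1 - Real.exp (-(lam * ρ ω * t) / (2 * d))) ∂μ
        ≤ (d:ℝ) * (lam * t / (2 * (d:ℝ)) * E) := this
      _ = lam * t * E / 2 := by field_simp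
  have hlb : ∀ᶠ d : ℕ in atTop,
      lam * t * E / 2 - (lam * t) ^ 2 * (Θ * E) / (4 * (d:ℝ)) ≤
        (d:ℝ) * ∫ ω, (1 - Real.exp (-(lam * ρ ω * t) / (2 * d))) ∂μ := by
    filter_upwards [eventually_ge_atTop 1] with d hd
    have hd0 : (0:ℝ) < d := by exact_mod_cast hd
    have hmono : (∫ ω, ((lam * t / (2 * (d:ℝ))) * ρ ω
          - (lam * t / (2 * (d:ℝ))) ^ 2 * ρ ω ^ 2) ∂μ)
        ≤ ∫ ω, (1 - Real.exp (-(lam * ρ ω * t) / (2 * (d:ℝ)))) ∂μ := by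
      refine integral_mono_ae ((hρint.const_mul _).sub (hρsq.const_mul _)) (hint d) ?_
      filter_upwards [hbd] with ω h
      have heq : lam * ρ ω * t / (2 * (d:ℝ)) = lam * t / (2 * (d:ℝ)) * ρ ω := by
        field_simp
      have hx : 0 ≤ lam * ρ ω * t / (2 * (d:ℝ)) := div_nonneg (mul_nonneg (mul_nonneg hlam.le h.1) ht.le) (by positivity)
      have := exp_lb hx
      rw [neg_div]
      calc lam * t / (2 * (d:ℝ)) * ρ ω - (lam * t / (2 * (d:ℝ))) ^ 2 * ρ ω ^ 2
          = lam * ρ ω * t / (2 * (d:ℝ)) - (lam * ρ ω * t / (2 * (d:ℝ))) ^ 2 := by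
            rw [heq]; ring
        _ ≤ 1 - Real.exp (-(lam * ρ ω * t / (2 * (d:ℝ)))) := this
    rw [integral_sub (hρint.const_mul _) (hρsq.const_mul _),
      integral_const_mul, integral_const_mul, ← hE] at hmono
    have h2 := mul_le_mul_of_nonneg_left hmono hd0.le
    have e1 : (d:ℝ) * (lam * t / (2 * (d:ℝ)) * E
          - (lam * t / (2 * (d:ℝ))) ^ 2 * ∫ ω, ρ ω ^ 2 ∂μ)
        = lam * t * E / 2 - (lam * t) ^ 2 * (∫ ω, ρ ω ^ 2 ∂μ) / (4 * (d:ℝ)) := by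
      field_simp; ring
    rw [e1] at h2
    refine le_trans ?_ h2
    gcongr
  have hlow : Tendsto (fun d : ℕ =>
      lam * t * E / 2 - (lam * t) ^ 2 * (Θ * E) / (4 * (d:ℝ))) atTop (nhds (lam * t * E / 2)) := by
    have h0 : Tendsto (fun d : ℕ => ((lam * t) ^ 2 * (Θ * E) / 4) * ((d:ℝ))⁻¹) atTop (nhds 0) := by
      simpa using tendsto_const_nhds.mul (tendsto_natCast_atTop_atTop (R := ℝ)).inv_tendsto_atTop
    have h1 : Tendsto (fun d : ℕ =>
        lam * t * E / 2 - ((lam * t) ^ 2 * (Θ * E) / 4) * ((d:ℝ))⁻¹) atTop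
        (nhds (lam * t * E / 2 - 0)) := Tendsto.sub tendsto_const_nhds h0
    rw [sub_zero] at h1
    refine h1.congr fun d => by ring
  exact tendsto_of_tendsto_of_tendsto_of_le_of_le' hlow tendsto_const_nhds hlb hub

private noncomputable def rf (d : ℕ) : ℝ := (d:ℝ) ^ ((1:ℝ)/3)
private noncomputable def qf (d : ℕ) : ℝ := (d:ℝ) / Real.log d
private noncomputable def uf (s : ℝ) (d : ℕ) : ℝ := s * Real.log d / rf d
private noncomputable def af (s : ℝ) (d : ℕ) : ℝ :=
  1 - Real.exp (-(s * Real.log d) / (d:ℝ) ^ ((1:ℝ)/3))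
private noncomputable def mf {Ω : Type*} [MeasurableSpace Ω] (μ : Measure Ω)
    (ρ : Ω → ℝ) (lam t : ℝ) (d : ℕ) : ℝ :=
  ∫ ω, (1 - Real.exp (-(lam * ρ ω * t) / (2 * d))) ∂μ

private lemma hrf : Tendsto rf atTop atTop :=
  (tendsto_rpow_atTop (by norm_num)).comp tendsto_natCast_atTop_atTop

private lemma hqf : Tendsto qf atTop atTop := by
  have h1 : Tendsto (fun x : ℝ => Real.log x / x) atTop (nhds 0) := by
    have := (isLittleO_log_rpow_atTop one_pos).tendsto_div_nhds_zero
    simpa [Real.rpow_one] using this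
  have h2 : Tendsto (fun d : ℕ => Real.log d / (d:ℝ)) atTop (nhds 0) :=
    h1.comp tendsto_natCast_atTop_atTop
  have h3 : Tendsto (fun d : ℕ => Real.log d / (d:ℝ)) atTop (nhdsWithin 0 (Set.Ioi 0)) := by
    rw [tendsto_nhdsWithin_iff]
    refine ⟨h2, ?_⟩
    filter_upwards [eventually_ge_atTop 2] with d hd
    have hd1 : (1:ℝ) < d := by exact_mod_cast lt_of_lt_of_le one_lt_two hd
    exact Set.mem_Ioi.mpr (div_pos (Real.log_pos hd1) (by linarith))
  have h4 := h3.inv_tendsto_nhdsGT_zero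
  refine h4.congr fun d => ?_
  simp only [Pi.inv_apply, qf, inv_div]

private lemma huf_aux : Tendsto (fun d : ℕ => Real.log d / rf d) atTop (nhds 0) :=
  ((isLittleO_log_rpow_atTop (by norm_num : (0:ℝ) < 1/3)).tendsto_div_nhds_zero).comp
    tendsto_natCast_atTop_atTop

private lemma huf (s : ℝ) : Tendsto (uf s) atTop (nhds 0) := by
  have h := huf_aux.const_mul s
  rw [mul_zero] at h
  refine h.congr fun d => ?_
  simp [uf, mul_div_assoc]

private lemma huf_pos {s : ℝ} (hs : 0 < s) : ∀ᶠ d : ℕ in atTop, 0 < uf s d := by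
  filter_upwards [eventually_ge_atTop 2] with d hd
  have hd1 : (1:ℝ) < d := by exact_mod_cast lt_of_lt_of_le one_lt_two hd
  have hr : 0 < rf d := Real.rpow_pos_of_pos (by linarith) _
  exact div_pos (mul_pos hs (Real.log_pos hd1)) hr

private lemma haf_eq (s : ℝ) (d : ℕ) : af s d = 1 - Real.exp (-(uf s d)) := by
  simp [af, uf, rf, neg_div]

private lemma haf0 (s : ℝ) : Tendsto (af s) atTop (nhds 0) := by
  have h1 : Tendsto (fun d : ℕ => Real.exp (-(uf s d))) atTop (nhds 1) := by
    have := Real.continuous_exp.continuousAt.tendsto.comp ((huf s).neg)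
    simpa [Function.comp_def] using this
  have h2 : Tendsto (fun d : ℕ => 1 - Real.exp (-(uf s d))) atTop (nhds (1 - 1)) :=
    tendsto_const_nhds.sub h1
  rw [sub_self] at h2
  exact h2.congr fun d => (haf_eq s d).symm

private lemma haf_pos {s : ℝ} (hs : 0 < s) : ∀ᶠ d : ℕ in atTop, 0 < af s d := by
  filter_upwards [huf_pos hs] with d hd
  rw [haf_eq]
  have h1 : Real.exp (-(uf s d)) < Real.exp 0 := Real.exp_lt_exp.mpr (by linarith)
  rw [Real.exp_zero] at h1
  linarith

private lemma haf_div {s : ℝ} (hs : 0 < s) :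
    Tendsto (fun d : ℕ => af s d / uf s d) atTop (nhds 1) := by
  have hcomp : Tendsto (fun d : ℕ => -(uf s d)) atTop (nhdsWithin 0 {(0:ℝ)}ᶜ) := by
    rw [tendsto_nhdsWithin_iff]
    constructor
    · simpa using (huf s).neg
    · filter_upwards [huf_pos hs] with d hd
      simp only [Set.mem_compl_iff, Set.mem_singleton_iff]
      exact neg_ne_zero.mpr (ne_of_gt hd)
  have h := aux_exp.comp hcomp
  refine h.congr fun d => ?_
  simp only [Function.comp]
  rw [haf_eq, div_neg, ← neg_div, neg_sub]

/-- The key Laplace-transform limit (Equation (42.5) of the paper):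
`⌊d^{1/3}⌋ ((1 - (1 - e^{-s log d / d^{1/3}}) E[1 - e^{-λρt/(2d)}])^{⌊d/log d⌋} - 1)
  → -(s λ t E ρ)/2`. -/
theorem stmt7 {Ω : Type*} [MeasurableSpace Ω] (μ : Measure Ω) [IsProbabilityMeasure μ]
    (Θ : ℝ) (hΘ : 0 < Θ) (ρ : Ω → ℝ) (hρmeas : Measurable ρ)
    (hbd : ∀ᵐ ω ∂μ, ρ ω ∈ Set.Icc 0 Θ) (hEpos : 0 < ∫ ω, ρ ω ∂μ)
    (lam t s : ℝ) (hlam : 0 < lam) (ht : 0 < t) (hs : 0 < s) :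
    Tendsto (fun d : ℕ =>
        (⌊(d : ℝ) ^ ((1 : ℝ) / 3)⌋₊ : ℝ) *
          ((1 - (1 - Real.exp (-(s * Real.log d) / (d : ℝ) ^ ((1 : ℝ) / 3))) *
              ∫ ω, (1 - Real.exp (-(lam * ρ ω * t) / (2 * d))) ∂μ) ^
            ⌊(d : ℝ) / Real.log d⌋₊ - 1))
      atTop (nhds (-(s * lam * t * ∫ ω, ρ ω ∂μ) / 2)) := by
  set E := ∫ ω, ρ ω ∂μ with hEdef
  set L : ℝ := lam * t * E / 2 with hLdef
  have key : Tendsto (fun d : ℕ => (d:ℝ) * mf μ ρ lam t d) atTop (nhds L) :=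
    key_dm μ Θ hΘ ρ hρmeas hbd lam t hlam ht
  have hLpos : 0 < L := by
    rw [hLdef]
    have := mul_pos (mul_pos hlam ht) hEpos
    linarith
  show Tendsto (fun d : ℕ =>
      (⌊rf d⌋₊ : ℝ) * ((1 - af s d * mf μ ρ lam t d) ^ ⌊qf d⌋₊ - 1)) atTop
    (nhds (-(s * lam * t * E) / 2))
  have hB_div : Tendsto (fun d : ℕ => (⌊rf d⌋₊ : ℝ) / rf d) atTop (nhds 1) :=
    tendsto_nat_floor_div_atTop.comp hrf
  have hB_top : Tendsto (fun d : ℕ => (⌊rf d⌋₊ : ℝ)) atTop atTop :=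
    tendsto_natCast_atTop_atTop.comp (tendsto_nat_floor_atTop.comp hrf)
  have hn_div : Tendsto (fun d : ℕ => (⌊qf d⌋₊ : ℝ) / qf d) atTop (nhds 1) :=
    tendsto_nat_floor_div_atTop.comp hqf
  have hn_top : Tendsto (fun d : ℕ => ⌊qf d⌋₊) atTop atTop :=
    tendsto_nat_floor_atTop.comp hqf
  -- m tends to 0 and is eventually positive
  have hm0 : Tendsto (fun d : ℕ => mf μ ρ lam t d) atTop (nhds 0) := by
    have h1 := key.mul (tendsto_natCast_atTop_atTop (R := ℝ)).inv_tendsto_atTop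
    rw [mul_zero] at h1
    refine h1.congr' ?_
    filter_upwards [eventually_ge_atTop 1] with d hd
    have hdne : (d:ℝ) ≠ 0 := by
      have : (0:ℝ) < d := by exact_mod_cast hd
      exact ne_of_gt this
    simp only [Pi.inv_apply]
    field_simp
  have hm_pos : ∀ᶠ d : ℕ in atTop, 0 < mf μ ρ lam t d := by
    have h2 : ∀ᶠ d : ℕ in atTop, 0 < (d:ℝ) * mf μ ρ lam t d :=
      key.eventually (eventually_gt_nhds hLpos)
    filter_upwards [h2, eventually_ge_atTop 1] with d h hd
    have hd0 : (0:ℝ) < d := by exact_mod_cast hd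
    nlinarith
  -- x = a * m
  have hx0 : Tendsto (fun d : ℕ => af s d * mf μ ρ lam t d) atTop (nhds 0) := by
    have := (haf0 s).mul hm0
    rwa [mul_zero] at this
  have hx_pos : ∀ᶠ d : ℕ in atTop, 0 < af s d * mf μ ρ lam t d := by
    filter_upwards [haf_pos hs, hm_pos] with d h1 h2
    exact mul_pos h1 h2
  have hx_lt1 : ∀ᶠ d : ℕ in atTop, af s d * mf μ ρ lam t d < 1 :=
    hx0.eventually (eventually_lt_nhds one_pos)
  -- P = B * n * x tends to s*L
  have hP : Tendsto (fun d : ℕ =>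
      (⌊rf d⌋₊ : ℝ) * (⌊qf d⌋₊ : ℝ) * (af s d * mf μ ρ lam t d)) atTop (nhds (s * L)) := by
    have hmain : Tendsto (fun d : ℕ =>
        ((⌊rf d⌋₊ : ℝ) / rf d) * ((⌊qf d⌋₊ : ℝ) / qf d) * (af s d / uf s d) *
          (s * ((d:ℝ) * mf μ ρ lam t d))) atTop (nhds (1 * 1 * 1 * (s * L))) :=
      ((hB_div.mul hn_div).mul (haf_div hs)).mul (key.const_mul s)
    rw [one_mul, one_mul, one_mul] at hmain
    refine hmain.congr' ?_
    filter_upwards [eventually_ge_atTop 2] with d hd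
    have hd1 : (1:ℝ) < d := by exact_mod_cast lt_of_lt_of_le one_lt_two hd
    have hlog : 0 < Real.log d := Real.log_pos hd1
    have hrpos : 0 < rf d := Real.rpow_pos_of_pos (by linarith) _
    have hqpos : 0 < qf d := div_pos (by linarith) hlog
    have hupos : 0 < uf s d := div_pos (mul_pos hs hlog) hrpos
    have hrqu : rf d * qf d * uf s d = s * d := by
      rw [qf, uf]
      field_simp
    have hrepl : s * ((d:ℝ) * mf μ ρ lam t d) = rf d * qf d * uf s d * mf μ ρ lam t d := by
      rw [hrqu]; ring
    rw [hrepl]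
    field_simp
  -- n * x tends to 0
  have h_nx : Tendsto (fun d : ℕ => (⌊qf d⌋₊ : ℝ) * (af s d * mf μ ρ lam t d)) atTop
      (nhds 0) := by
    have h1 := hP.mul hB_top.inv_tendsto_atTop
    rw [mul_zero] at h1
    refine h1.congr' ?_
    filter_upwards [hB_top.eventually_ge_atTop 1] with d hd
    have hBne : (⌊rf d⌋₊ : ℝ) ≠ 0 := by linarith
    simp only [Pi.inv_apply]
    field_simp
  -- h(x) = -log(1-x)/x tends to 1
  have hhx : Tendsto (fun d : ℕ =>
      -Real.log (1 - af s d * mf μ ρ lam t d) / (af s d * mf μ ρ lam t d)) atTop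
      (nhds 1) := by
    refine aux_log.comp ?_
    rw [tendsto_nhdsWithin_iff]
    refine ⟨hx0, ?_⟩
    filter_upwards [hx_pos] with d hd
    simp only [Set.mem_compl_iff, Set.mem_singleton_iff]
    exact ne_of_gt hd
  -- z = n * log(1-x)
  have hz_eq : ∀ᶠ d : ℕ in atTop,
      -(((⌊qf d⌋₊ : ℝ) * (af s d * mf μ ρ lam t d)) *
        (-Real.log (1 - af s d * mf μ ρ lam t d) / (af s d * mf μ ρ lam t d))) =
      (⌊qf d⌋₊ : ℝ) * Real.log (1 - af s d * mf μ ρ lam t d) := by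
    filter_upwards [hx_pos] with d hd
    have hne : af s d * mf μ ρ lam t d ≠ 0 := ne_of_gt hd
    have ha : af s d ≠ 0 := left_ne_zero_of_mul hne
    have hm : mf μ ρ lam t d ≠ 0 := right_ne_zero_of_mul hne
    field_simp
  have hz0 : Tendsto (fun d : ℕ =>
      (⌊qf d⌋₊ : ℝ) * Real.log (1 - af s d * mf μ ρ lam t d)) atTop (nhds 0) := by
    have h1 := (h_nx.mul hhx).neg
    rw [zero_mul, neg_zero] at h1
    exact h1.congr' hz_eq
  have hz_ne : ∀ᶠ d : ℕ in atTop,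
      (⌊qf d⌋₊ : ℝ) * Real.log (1 - af s d * mf μ ρ lam t d) ≠ 0 := by
    filter_upwards [hx_pos, hx_lt1, hn_top.eventually_ge_atTop 1] with d h1 h2 h3
    have hlogneg : Real.log (1 - af s d * mf μ ρ lam t d) < 0 :=
      Real.log_neg (by linarith) (by linarith)
    have hnpos : (0:ℝ) < (⌊qf d⌋₊ : ℝ) := by exact_mod_cast h3
    exact ne_of_lt (mul_neg_of_pos_of_neg hnpos hlogneg)
  -- B * z tends to -(s*L)
  have hBz : Tendsto (fun d : ℕ =>
      (⌊rf d⌋₊ : ℝ) * ((⌊qf d⌋₊ : ℝ) * Real.log (1 - af s d * mf μ ρ lam t d))) atTop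
      (nhds (-(s * L))) := by
    have h1 := (hP.mul hhx).neg
    rw [mul_one] at h1
    refine h1.congr' ?_
    filter_upwards [hx_pos] with d hd
    have hne : af s d * mf μ ρ lam t d ≠ 0 := ne_of_gt hd
    have ha : af s d ≠ 0 := left_ne_zero_of_mul hne
    have hm : mf μ ρ lam t d ≠ 0 := right_ne_zero_of_mul hne
    field_simp
  -- (exp z - 1)/z tends to 1
  have hGz : Tendsto (fun d : ℕ =>
      (Real.exp ((⌊qf d⌋₊ : ℝ) * Real.log (1 - af s d * mf μ ρ lam t d)) - 1) /
        ((⌊qf d⌋₊ : ℝ) * Real.log (1 - af s d * mf μ ρ lam t d))) atTop (nhds 1) := by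
    refine aux_exp.comp ?_
    rw [tendsto_nhdsWithin_iff]
    refine ⟨hz0, ?_⟩
    filter_upwards [hz_ne] with d hd
    simpa using hd
  -- finish
  have final := hBz.mul hGz
  rw [mul_one] at final
  have hval : -(s * lam * t * E) / 2 = -(s * L) := by rw [hLdef]; ring
  rw [hval]
  refine final.congr' ?_
  filter_upwards [hx_pos, hx_lt1, hz_ne] with d hxp hx1 hzne
  have h1mx : 0 < 1 - af s d * mf μ ρ lam t d := by linarith
  have hexp : Real.exp ((⌊qf d⌋₊ : ℝ) * Real.log (1 - af s d * mf μ ρ lam t d)) =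
      (1 - af s d * mf μ ρ lam t d) ^ ⌊qf d⌋₊ := by
    rw [Real.exp_nat_mul, Real.exp_log h1mx]
  rw [hexp]
  have hq : (⌊qf d⌋₊ : ℝ) ≠ 0 := left_ne_zero_of_mul hzne
  have hl : Real.log (1 - af s d * mf μ ρ lam t d) ≠ 0 := right_ne_zero_of_mul hzne
  field_simp
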